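/- The series $\sum_{p \text{ prime}, p \equiv 3 \pmod 4} \frac{1}{p}$ diverges. -/

import Mathlib

open Complex Set

noncomputable def chiC : DirichletCharacter ℂ 4 := ZMod.χ₄.ringHomComp (Int.castRingHom ℂ)

lemma chiC_apply_nat (n : ℕ) : chiC ((n : ZMod 4)) = ((ZMod.χ₄ (n : ZMod 4) : ℤ) : ℂ) := rfl

lemma chiC_ne_one : chiC ≠ 1 := by
  intro h
  have h1 : IsUnit ((3:ℕ) : ZMod 4) := by decide
  have h2 : chiC ((3:ℕ) : ZMod 4) = 1 := by rw [h]; exact MulChar.one_apply h1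
  rw [chiC_apply_nat, ZMod.χ₄_nat_three_mod_four (by norm_num)] at h2
  norm_num at h2

lemma cpow_neg_eq (p : Nat.Primes) (x : ℝ) :
    ((p : ℕ) : ℂ) ^ (-(x : ℂ)) = ((((p : ℕ) : ℝ) ^ (-x) : ℝ) : ℂ) := by
  rw [show -(x:ℂ) = ((-x : ℝ) : ℂ) by push_cast; ring,
    show ((p:ℕ):ℂ) = ((((p:ℕ):ℝ)):ℂ) by push_cast; rfl,
    ← Complex.ofReal_cpow (by positivity)]

lemma znorm_le (p : Nat.Primes) (x : ℝ) (hx : 0 ≤ x) :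
    ‖chiC (p : ℕ) * ((p : ℕ) : ℂ) ^ (-(x : ℂ))‖ ≤ ((p : ℕ) : ℝ) ^ (-x) := by
  rw [norm_mul, cpow_neg_eq, Complex.norm_real, Real.norm_eq_abs]
  rw [_root_.abs_of_nonneg (by positivity : (0:ℝ) ≤ ((p:ℕ):ℝ) ^ (-x))]
  exact mul_le_of_le_one_left (by positivity) (chiC.norm_le_one _)

lemma rpow_le_inv (p : Nat.Primes) (x : ℝ) (hx : 1 ≤ x) :
    ((p : ℕ) : ℝ) ^ (-x) ≤ (((p : ℕ) : ℝ))⁻¹ := by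
  rw [← Real.rpow_neg_one]
  have h2 : (2:ℝ) ≤ ((p:ℕ):ℝ) := by exact_mod_cast p.2.two_le
  exact Real.rpow_le_rpow_of_exponent_le (by linarith) (by linarith)

lemma exists_bound_logL : ∃ C : ℝ, ∀ x : ℝ, x ∈ Set.Icc (1:ℝ) 2 →
    ‖Real.log ‖DirichletCharacter.LFunction chiC (x : ℂ)‖‖ ≤ C := by
  have hLcont : Continuous fun x : ℝ ↦ DirichletCharacter.LFunction chiC (x : ℂ) := by
    refine (continuous_iff_continuousAt.mpr fun s ↦ ?_).comp Complex.continuous_ofReal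
    exact (DirichletCharacter.differentiableAt_LFunction chiC s (Or.inr chiC_ne_one)).continuousAt
  have hcont : ContinuousOn (fun x : ℝ ↦ Real.log ‖DirichletCharacter.LFunction chiC (x : ℂ)‖)
      (Set.Icc (1:ℝ) 2) := by
    refine Real.continuousOn_log.comp hLcont.norm.continuousOn fun x hx ↦ ?_
    simp only [Set.mem_compl_iff, Set.mem_singleton_iff, norm_eq_zero]
    exact DirichletCharacter.LFunction_ne_zero_of_one_le_re chiC (Or.inl chiC_ne_one)
      (by simpa using hx.1)
  exact (isCompact_Icc).exists_bound_of_continuousOn hcont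

lemma summable_inv_sq : Summable (fun p : Nat.Primes ↦ (((p:ℕ):ℝ)⁻¹)^2) := by
  have := Nat.Primes.summable_rpow.mpr (by norm_num : (-2:ℝ) < -1)
  refine this.congr fun p ↦ ?_
  have hp : (0:ℝ) < ((p:ℕ):ℝ) := by exact_mod_cast p.2.pos
  rw [show (-2:ℝ) = ((-2:ℤ):ℝ) by norm_num, Real.rpow_intCast, zpow_neg, ← inv_zpow]
  norm_cast

lemma tsum_rpow_le
    (hB : Summable (fun p : Nat.Primes ↦ if (p:ℕ) % 4 = 3 then (1:ℝ)/((p:ℕ):ℝ) else 0))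
    {C₁ : ℝ} (hC₁ : ∀ x : ℝ, x ∈ Set.Icc (1:ℝ) 2 →
      ‖Real.log ‖DirichletCharacter.LFunction chiC (x:ℂ)‖‖ ≤ C₁)
    {x : ℝ} (hx1 : 1 < x) (hx2 : x ≤ 2) :
    (∑' p : Nat.Primes, ((p:ℕ):ℝ) ^ (-x)) ≤
      C₁ + (∑' p : Nat.Primes, (((p:ℕ):ℝ)⁻¹)^2)
      + 2 * (∑' p : Nat.Primes, if (p:ℕ) % 4 = 3 then (1:ℝ)/((p:ℕ):ℝ) else 0) + 1 := by
  have hxc : 1 < ((x:ℂ)).re := by simpa using hx1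
  set z : Nat.Primes → ℂ := fun p ↦ chiC (p:ℕ) * ((p:ℕ):ℂ) ^ (-(x:ℂ)) with hz
  have hsx : Summable fun p : Nat.Primes ↦ ((p:ℕ):ℝ) ^ (-x) :=
    Nat.Primes.summable_rpow.mpr (by linarith)
  have hznorm : ∀ p : Nat.Primes, ‖z p‖ ≤ ((p:ℕ):ℝ) ^ (-x) := fun p ↦ znorm_le p x (by linarith)
  have hzhalf : ∀ p : Nat.Primes, ‖z p‖ ≤ 1/2 := by
    intro p
    refine (hznorm p).trans ((rpow_le_inv p x hx1.le).trans ?_)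
    rw [one_div]
    exact inv_anti₀ (by norm_num) (by exact_mod_cast p.2.two_le)
  have hsz : Summable z := Summable.of_norm_bounded hsx hznorm
  have hT : Summable fun p : Nat.Primes ↦ -Complex.log (1 - z p) :=
    DirichletCharacter.summable_neg_log_one_sub_mul_prime_cpow chiC hxc
  have hR : Summable fun p : Nat.Primes ↦ (-Complex.log (1 - z p) - z p) := hT.sub hsz
  -- termwise bound on R
  have hRterm : ∀ p : Nat.Primes, ‖-Complex.log (1 - z p) - z p‖ ≤ (((p:ℕ):ℝ)⁻¹)^2 := by
    intro p
    have h1 : ‖-z p‖ < 1 := by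
      rw [norm_neg]; exact lt_of_le_of_lt (hzhalf p) (by norm_num)
    have h2 : -Complex.log (1 - z p) - z p = -(Complex.log (1 + -z p) - -z p) := by
      rw [← sub_eq_add_neg]; ring
    rw [h2, norm_neg]
    refine (Complex.norm_log_one_add_sub_self_le h1).trans ?_
    have h3 : (1 - ‖-z p‖)⁻¹ ≤ 2 := by
      rw [norm_neg]
      have := hzhalf p
      rw [inv_le_comm₀ (by linarith [hzhalf p, norm_nonneg (z p)]) (by norm_num)]
      linarith
    calc ‖-z p‖^2 * (1-‖-z p‖)⁻¹ / 2 ≤ ‖-z p‖^2 * 2 / 2 := by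
          gcongr
      _ = ‖z p‖^2 := by rw [norm_neg]; ring
      _ ≤ (((p:ℕ):ℝ)⁻¹)^2 := by
          have := (hznorm p).trans (rpow_le_inv p x hx1.le)
          gcongr
  have hRnorm : Summable fun p : Nat.Primes ↦ ‖-Complex.log (1 - z p) - z p‖ :=
    Summable.of_nonneg_of_le (fun _ ↦ norm_nonneg _) hRterm summable_inv_sq
  have hRbound : ‖∑' p : Nat.Primes, (-Complex.log (1 - z p) - z p)‖ ≤
      ∑' p : Nat.Primes, (((p:ℕ):ℝ)⁻¹)^2 :=
    (norm_tsum_le_tsum_norm hRnorm).trans (Summable.tsum_le_tsum hRterm hRnorm summable_inv_sq)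
  -- Re T = log ‖L‖
  have hReT : (∑' p : Nat.Primes, -Complex.log (1 - z p)).re =
      Real.log ‖DirichletCharacter.LFunction chiC (x:ℂ)‖ := by
    have h1 := DirichletCharacter.LSeries_eulerProduct_exp_log chiC hxc
    have h2 := DirichletCharacter.LFunction_eq_LSeries chiC hxc
    rw [h2, ← h1, Complex.norm_exp, Real.log_exp]
  -- splitting
  set f₁ : Nat.Primes → ℝ := fun p ↦ (z p).re with hf₁
  set g₂ : Nat.Primes → ℝ := fun p ↦ if (p:ℕ) % 4 = 3 then ((p:ℕ):ℝ) ^ (-x) else 0 with hg₂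
  set f₃ : Nat.Primes → ℝ := fun p ↦ if (p:ℕ) = 2 then ((p:ℕ):ℝ) ^ (-x) else 0 with hf₃
  have hsplit : ∀ p : Nat.Primes, ((p:ℕ):ℝ) ^ (-x) = f₁ p + 2 * g₂ p + f₃ p := by
    intro p
    have hre : f₁ p = (chiC (p:ℕ)).re * ((p:ℕ):ℝ) ^ (-x) := by
      simp [hf₁, hz, cpow_neg_eq p x, Complex.mul_re]
    have hchi : chiC ((p:ℕ) : ZMod 4) = ((ZMod.χ₄ ((p:ℕ) : ZMod 4) : ℤ) : ℂ) := rfl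
    rcases p.2.eq_two_or_odd' with h2 | hodd
    · have : ZMod.χ₄ ((p:ℕ) : ZMod 4) = 0 := by
        rw [ZMod.χ₄_nat_eq_if_mod_four]; simp [h2]
      rw [hre, hchi, this]
      simp [hg₂, hf₃, h2]
    · have hmod : (p:ℕ) % 4 = 1 ∨ (p:ℕ) % 4 = 3 := by
        have h1 : (p:ℕ) % 2 = 1 := Nat.odd_iff.mp hodd
        omega
      have hne2 : (p:ℕ) ≠ 2 := by
        rintro h; rw [h] at hodd; exact (Nat.not_odd_iff_even.mpr (by norm_num)) hodd
      rcases hmod with h1 | h3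
      · have : ZMod.χ₄ ((p:ℕ) : ZMod 4) = 1 := ZMod.χ₄_nat_one_mod_four h1
        rw [hre, hchi, this]
        simp [hg₂, hf₃, hne2, h1]
      · have : ZMod.χ₄ ((p:ℕ) : ZMod 4) = -1 := ZMod.χ₄_nat_three_mod_four h3
        rw [hre, hchi, this]
        simp [hg₂, hf₃, hne2, h3]
        ring
  have hs₁ : Summable f₁ := by
    refine Summable.of_norm_bounded hsx fun p ↦ ?_
    exact (Complex.abs_re_le_norm (z p)).trans (hznorm p)
  have hg₂le : ∀ p : Nat.Primes, g₂ p ≤ ((p:ℕ):ℝ) ^ (-x) := by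
    intro p
    by_cases h : (p:ℕ) % 4 = 3 <;> simp [hg₂, h] <;> positivity
  have hs₂ : Summable g₂ :=
    Summable.of_nonneg_of_le (fun p ↦ by by_cases h : (p:ℕ) % 4 = 3 <;> simp [hg₂, h] <;> positivity)
      hg₂le hsx
  have hs₃ : Summable f₃ :=
    Summable.of_nonneg_of_le (fun p ↦ by by_cases h : (p:ℕ) = 2 <;> simp [hf₃, h] <;> positivity)
      (fun p ↦ by by_cases h : (p:ℕ) = 2 <;> simp [hf₃, h] <;> positivity) hsx
  have hsum_eq : (∑' p : Nat.Primes, ((p:ℕ):ℝ) ^ (-x)) =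
      (∑' p, f₁ p) + (∑' p, 2 * g₂ p) + (∑' p, f₃ p) := by
    rw [← hs₁.tsum_add (hs₂.mul_left 2), ← (hs₁.add (hs₂.mul_left 2)).tsum_add hs₃]
    exact tsum_congr hsplit
  have h₁ : (∑' p, f₁ p) ≤ C₁ + (∑' p : Nat.Primes, (((p:ℕ):ℝ)⁻¹)^2) := by
    have he : (∑' p, f₁ p) = (∑' p, z p).re := (Complex.re_tsum hsz).symm
    have hz2 : (∑' p, z p) = (∑' p : Nat.Primes, -Complex.log (1 - z p))
        - (∑' p : Nat.Primes, (-Complex.log (1 - z p) - z p)) := by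
      rw [← hT.tsum_sub hR]
      exact tsum_congr fun p ↦ by ring
    rw [he, hz2, Complex.sub_re, hReT]
    have h4 : Real.log ‖DirichletCharacter.LFunction chiC (x:ℂ)‖ ≤ C₁ :=
      (le_abs_self _).trans (hC₁ x ⟨hx1.le, hx2⟩)
    have h5 : -(∑' p : Nat.Primes, (-Complex.log (1 - z p) - z p)).re ≤
        ∑' p : Nat.Primes, (((p:ℕ):ℝ)⁻¹)^2 := by
      refine (neg_le_abs _).trans ((Complex.abs_re_le_norm _).trans ?_)
      exact hRbound
    linarith
  have h₂ : (∑' p, 2 * g₂ p) ≤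
      2 * (∑' p : Nat.Primes, if (p:ℕ) % 4 = 3 then (1:ℝ)/((p:ℕ):ℝ) else 0) := by
    rw [tsum_mul_left]
    have : (∑' p, g₂ p) ≤ ∑' p : Nat.Primes, if (p:ℕ) % 4 = 3 then (1:ℝ)/((p:ℕ):ℝ) else 0 := by
      refine Summable.tsum_le_tsum (fun p ↦ ?_) hs₂ hB
      by_cases h : (p:ℕ) % 4 = 3 <;> simp only [hg₂, h, if_true, if_false, le_refl]
      rw [one_div]
      exact rpow_le_inv p x hx1.le
    linarith
  have h₃ : (∑' p, f₃ p) ≤ 1 := by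
    classical
    have hterm : ∀ p : Nat.Primes,
        f₃ p ≤ (if p = (⟨2, Nat.prime_two⟩ : Nat.Primes) then (1:ℝ) else 0) := by
      intro p
      by_cases h : (p:ℕ) = 2
      · have hp2 : p = (⟨2, Nat.prime_two⟩ : Nat.Primes) := Subtype.ext h
        rw [hp2]
        simp only [hf₃, if_true]
        have := rpow_le_inv (⟨2, Nat.prime_two⟩ : Nat.Primes) x hx1.le
        simp only [show (((⟨2, Nat.prime_two⟩ : Nat.Primes) : ℕ) : ℝ) = 2 by norm_num] at this ⊢
        refine this.trans (by split_ifs with hc <;> [norm_num; exact absurd rfl hc])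
      · have hp2 : p ≠ (⟨2, Nat.prime_two⟩ : Nat.Primes) := fun hc ↦ h (by rw [hc])
        simp [hf₃, h, hp2]
    calc (∑' p, f₃ p) ≤ ∑' p : Nat.Primes, (if p = (⟨2, Nat.prime_two⟩ : Nat.Primes)
            then (1:ℝ) else 0) :=
          Summable.tsum_le_tsum hterm hs₃ (hasSum_ite_eq _ (1:ℝ)).summable
      _ = 1 := (hasSum_ite_eq _ (1:ℝ)).tsum_eq
  linarith [hsum_eq, h₁, h₂, h₃]

theorem sum_reciprocals_primes_three_mod_four_diverges :
    ¬ Summable (Set.indicator {p : ℕ | p.Prime ∧ p % 4 = 3} (fun p => (1 : ℝ) / p)) := by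
  intro h
  have hB : Summable (fun p : Nat.Primes ↦ if (p:ℕ) % 4 = 3 then (1:ℝ)/((p:ℕ):ℝ) else 0) := by
    have h2 : Summable ((Set.indicator {p : ℕ | p.Prime ∧ p % 4 = 3} (fun p => (1 : ℝ) / p)) ∘
        (Subtype.val : Nat.Primes → ℕ)) := h.comp_injective Subtype.val_injective
    refine h2.congr fun p ↦ ?_
    by_cases hm : (p:ℕ) % 4 = 3
    · rw [Function.comp_apply, Set.indicator_of_mem (show (p:ℕ) ∈ {q : ℕ | q.Prime ∧ q % 4 = 3} from ⟨p.2, hm⟩)]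
      simp [hm]
    · rw [Function.comp_apply, Set.indicator_of_notMem (fun hc ↦ hm hc.2)]
      simp [hm]
  obtain ⟨C₁, hC₁⟩ := exists_bound_logL
  set M : ℝ := C₁ + (∑' p : Nat.Primes, (((p:ℕ):ℝ)⁻¹)^2)
      + 2 * (∑' p : Nat.Primes, if (p:ℕ) % 4 = 3 then (1:ℝ)/((p:ℕ):ℝ) else 0) + 1 with hM
  apply Nat.Primes.not_summable_one_div
  refine summable_of_sum_le (c := M) (fun p ↦ by positivity) (fun F ↦ ?_)
  have hcont : ∀ p : Nat.Primes, Filter.Tendsto (fun y : ℝ ↦ ((p:ℕ):ℝ) ^ (-y))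
      (nhdsWithin 1 (Set.Ioi 1)) (nhds (((p:ℕ):ℝ) ^ (-(1:ℝ)))) := by
    intro p
    have hp : (0:ℝ) < ((p:ℕ):ℝ) := by exact_mod_cast p.2.pos
    have hc : Continuous fun y : ℝ ↦ ((p:ℕ):ℝ) ^ (-y) := by
      have : (fun y : ℝ ↦ ((p:ℕ):ℝ) ^ (-y)) =
          fun y : ℝ ↦ Real.exp (Real.log ((p:ℕ):ℝ) * (-y)) := by
        funext y; rw [Real.rpow_def_of_pos hp]
      rw [this]; fun_prop
    exact (hc.tendsto 1).mono_left nhdsWithin_le_nhds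
  have htend : Filter.Tendsto (fun y : ℝ ↦ ∑ p ∈ F, ((p:ℕ):ℝ) ^ (-y))
      (nhdsWithin 1 (Set.Ioi 1)) (nhds (∑ p ∈ F, ((p:ℕ):ℝ) ^ (-(1:ℝ)))) :=
    tendsto_finset_sum _ (fun p _ ↦ hcont p)
  have hev : ∀ᶠ y in nhdsWithin (1:ℝ) (Set.Ioi (1:ℝ)), (∑ p ∈ F, ((p:ℕ):ℝ) ^ (-y)) ≤ M := by
    filter_upwards [Ioc_mem_nhdsGT (by norm_num : (1:ℝ) < 2)] with y hy
    have hsy : Summable fun p : Nat.Primes ↦ ((p:ℕ):ℝ) ^ (-y) :=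
      Nat.Primes.summable_rpow.mpr (by linarith [hy.1])
    exact (Summable.sum_le_tsum F (fun p _ ↦ by positivity) hsy).trans (tsum_rpow_le hB hC₁ hy.1 hy.2)
  have hfin := le_of_tendsto htend hev
  calc ∑ p ∈ F, (1 / (p:ℕ) : ℝ) = ∑ p ∈ F, ((p:ℕ):ℝ) ^ (-(1:ℝ)) :=
        Finset.sum_congr rfl (fun p _ ↦ by rw [Real.rpow_neg_one, one_div])
    _ ≤ M := hfin
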